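/- Let K be a field and R = K[x, y] the polynomial ring in two indeterminates. Then the ideal I = (x) is an essential R-submodule of R, the R-module R/I is singular, and R/I contains no simple R-submodules (its socle is zero). Consequently, R is not a C-ring: not every nonzero cyclic singular R-module has a nonzero socle. -/

import Mathlib

universe u v w

/-- The socle of a module: the sum (supremum) of all simple submodules. -/
def moduleSocle (R : Type u) [Ring R] (M : Type v) [AddCommGroup M] [Module R M] :
    Submodule R M :=
  sSup {S : Submodule R M | IsSimpleModule R S}

/-- A submodule `N` of `M` is essential if `N ⊓ L ≠ ⊥` for every nonzero submodule `L` of `M`. -/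
def IsEssentialSubmodule {R : Type u} [Ring R] {M : Type v} [AddCommGroup M] [Module R M]
    (N : Submodule R M) : Prop :=
  ∀ L : Submodule R M, L ≠ ⊥ → N ⊓ L ≠ ⊥

/-- A module is semi-Artinian if every nonzero quotient has a nonzero socle. -/
def IsSemiartinianModule (R : Type u) [Ring R] (M : Type v) [AddCommGroup M] [Module R M] :
    Prop :=
  ∀ N : Submodule R M, N ≠ ⊤ → moduleSocle R (M ⧸ N) ≠ ⊥

/-- A module is singular if the annihilator of each of its elements is an essential left
ideal of `R`. -/
def IsSingularModule (R : Type u) [Ring R] (M : Type v) [AddCommGroup M] [Module R M] : Prop :=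
  ∀ m : M, IsEssentialSubmodule (LinearMap.ker (LinearMap.toSpanSingleton R M m))

/-- Property (◇): every finitely generated left `R`-module containing an essential simple
submodule is Artinian. -/
def HasPropertyDiamond (R : Type u) [Ring R] : Prop :=
  ∀ (M : Type v) [AddCommGroup M] [Module R M], Module.Finite R M →
    (∃ S : Submodule R M, IsSimpleModule R S ∧ IsEssentialSubmodule S) → IsArtinian R M

/-- A left C-ring: every nonzero cyclic singular left module has a nonzero socle. -/
def IsLeftCRing (R : Type u) [Ring R] : Prop :=
  ∀ (M : Type v) [AddCommGroup M] [Module R M], Nontrivial M →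
    (∃ m : M, Submodule.span R {m} = ⊤) → IsSingularModule R M →
    moduleSocle R M ≠ ⊥

/-- The Dickson torsion part of a module: the sum of all its semi-Artinian submodules. -/
def dicksonTorsionPart (R : Type u) [Ring R] (A : Type v) [AddCommGroup A] [Module R A] :
    Submodule R A :=
  sSup {N : Submodule R A | IsSemiartinianModule R N}

/-- In `R = K[x,y]`, the ideal `(x)` is essential, `R/(x)` is a cyclic singular module
with zero socle, and hence `R` is not a C-ring. -/
lemma aux_prime_X (K : Type u) [Field K] : Prime (MvPolynomial.X 0 : MvPolynomial (Fin 2) K) := by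
  have h : Prime ((MvPolynomial.finSuccEquiv K 1) (MvPolynomial.X 0)) := by
    rw [MvPolynomial.finSuccEquiv_X_zero]; exact Polynomial.prime_X
  exact (MulEquiv.prime_iff (MvPolynomial.finSuccEquiv K 1).toMulEquiv).mp h


theorem stmt19 (K : Type u) [Field K] :
    IsEssentialSubmodule
      (Ideal.span {MvPolynomial.X 0} : Ideal (MvPolynomial (Fin 2) K)) ∧
    IsSingularModule (MvPolynomial (Fin 2) K)
      (MvPolynomial (Fin 2) K ⧸
        (Ideal.span {MvPolynomial.X 0} : Ideal (MvPolynomial (Fin 2) K))) ∧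
    moduleSocle (MvPolynomial (Fin 2) K)
      (MvPolynomial (Fin 2) K ⧸
        (Ideal.span {MvPolynomial.X 0} : Ideal (MvPolynomial (Fin 2) K))) = ⊥ ∧
    ¬ IsLeftCRing.{u, u} (MvPolynomial (Fin 2) K) := by
  set R := MvPolynomial (Fin 2) K with hR
  set I : Ideal R := Ideal.span {MvPolynomial.X 0} with hI
  have hxp : Prime (MvPolynomial.X 0 : R) := aux_prime_X K
  have hxne : (MvPolynomial.X 0 : R) ≠ 0 := hxp.ne_zero
  have hIprime : I.IsPrime := (Ideal.span_singleton_prime hxne).mpr hxp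
  haveI : IsDomain (R ⧸ I) := Ideal.Quotient.isDomain I
  -- Part 1: essential
  have h1 : IsEssentialSubmodule (I : Submodule R R) := by
    intro L hL hbot
    obtain ⟨l, hlL, hl0⟩ := (Submodule.ne_bot_iff L).mp hL
    have hmem : MvPolynomial.X 0 * l ∈ (I : Submodule R R) ⊓ L := by
      constructor
      · exact Ideal.mul_mem_right _ _ (Ideal.subset_span rfl)
      · exact L.smul_mem _ hlL
    rw [hbot] at hmem
    have : MvPolynomial.X 0 * l = 0 := (Submodule.mem_bot R).mp hmem
    exact mul_ne_zero hxne hl0 this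
  -- annihilator of any element of R/I contains I
  have hann : ∀ m : R ⧸ I, I ≤ LinearMap.ker (LinearMap.toSpanSingleton R (R ⧸ I) m) := by
    intro m r hr
    obtain ⟨p, rfl⟩ := Submodule.Quotient.mk_surjective _ m
    simp only [LinearMap.mem_ker, LinearMap.toSpanSingleton_apply]
    rw [← Submodule.Quotient.mk_smul, Submodule.Quotient.mk_eq_zero]
    rw [smul_eq_mul]
    exact Ideal.mul_mem_right p I hr
  -- Part 2: singular
  have h2 : IsSingularModule R (R ⧸ I) := by
    intro m L hL hbot
    apply h1 L hL
    refine le_bot_iff.mp (le_trans (inf_le_inf_right L (hann m)) hbot.le)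
  -- Part 3: socle = ⊥
  have h3 : moduleSocle R (R ⧸ I) = ⊥ := by
    have hempty : {S : Submodule R (R ⧸ I) | IsSimpleModule R S} = ∅ := by
      ext S
      simp only [Set.mem_setOf_eq, Set.mem_empty_iff_false, iff_false]
      intro hS
      haveI := hS
      -- pick nonzero s in S
      haveI : Nontrivial S := IsSimpleModule.nontrivial R S
      obtain ⟨⟨s, hsS⟩, hs0⟩ := exists_ne (0 : S)
      have hsne : s ≠ 0 := by
        intro h; apply hs0; exact Subtype.ext h
      obtain ⟨s', rfl⟩ := Submodule.Quotient.mk_surjective _ s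
      have hs'I : s' ∉ I := by
        intro h; exact hsne ((Submodule.Quotient.mk_eq_zero _).mpr h)
      -- t = y • s is nonzero
      have hyI : (MvPolynomial.X 1 : R) ∉ I := by
        intro h
        obtain ⟨g, hg⟩ := Ideal.mem_span_singleton.mp h
        have := congrArg (MvPolynomial.eval (fun i : Fin 2 => if i = 0 then (0 : K) else 1)) hg
        simp at this
      have ht0 : (MvPolynomial.X 1 : R) • (Submodule.Quotient.mk s' : R ⧸ I) ≠ 0 := by
        rw [← Submodule.Quotient.mk_smul, smul_eq_mul]
        intro h
        rw [Submodule.Quotient.mk_eq_zero] at h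
        rcases hIprime.mem_or_mem h with h | h
        · exact hyI h
        · exact hs'I h
      set t : S := ⟨(MvPolynomial.X 1 : R) • Submodule.Quotient.mk s',
        S.smul_mem _ hsS⟩ with htdef
      have htne : t ≠ 0 := by
        intro h; apply ht0; exact congrArg Subtype.val h
      have hspan : Submodule.span R {t} = ⊤ := by
        rcases eq_bot_or_eq_top (Submodule.span R {t}) with h | h
        · exfalso; apply htne
          have : t ∈ Submodule.span R {t} := Submodule.mem_span_singleton_self t
          rw [h] at this; simpa using this
        · exact h
      have hsmem : (⟨Submodule.Quotient.mk s', hsS⟩ : S) ∈ Submodule.span R {t} := by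
        rw [hspan]; trivial
      obtain ⟨r, hr⟩ := Submodule.mem_span_singleton.mp hsmem
      have hr' : r • ((MvPolynomial.X 1 : R) • (Submodule.Quotient.mk s' : R ⧸ I))
          = Submodule.Quotient.mk s' := congrArg Subtype.val hr
      rw [smul_smul, ← Submodule.Quotient.mk_smul] at hr'
      have : (r * MvPolynomial.X 1) • s' - s' ∈ I := by
        rw [← Submodule.Quotient.mk_eq_zero (p := (I : Submodule R R)),
          Submodule.Quotient.mk_sub, hr', sub_self]
      have hfac : (r * MvPolynomial.X 1 - 1) * s' ∈ I := by
        have : (r * MvPolynomial.X 1 - 1) * s'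
            = (r * MvPolynomial.X 1) • s' - s' := by rw [smul_eq_mul]; ring
        rw [this]; exact ‹(r * MvPolynomial.X 1) • s' - s' ∈ I›
      rcases hIprime.mem_or_mem hfac with h | h
      · obtain ⟨g, hg⟩ := (Ideal.mem_span_singleton (α := MvPolynomial (Fin 2) K)).mp h
        have := congrArg (MvPolynomial.eval (fun _ : Fin 2 => (0 : K))) hg
        simp at this
      · exact hs'I h
    rw [moduleSocle, hempty, sSup_empty]
  refine ⟨h1, h2, h3, ?_⟩
  -- Part 4
  intro hC
  haveI : Nontrivial (R ⧸ I) := Ideal.Quotient.nontrivial_iff.mpr hIprime.ne_top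
  have hcyc : ∃ m : R ⧸ I, Submodule.span R {m} = ⊤ := by
    refine ⟨Submodule.Quotient.mk 1, ?_⟩
    rw [eq_top_iff]
    intro m _
    obtain ⟨p, rfl⟩ := Submodule.Quotient.mk_surjective _ m
    apply Submodule.mem_span_singleton.mpr
    exact ⟨p, by rw [← Submodule.Quotient.mk_smul, smul_eq_mul, mul_one]⟩
  exact hC (R ⧸ I) ‹_› hcyc h2 h3
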